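/- Let (S, →, s_init, Bad) be a transition system with → serial and all states of Bad absorbing (their only transitions are self-loops), let τ = τ_0 … τ_k be a loop-free counterexample (a finite →-path with τ_0 = s_init and τ_k ∈ Bad), and let Aux ⊆ S. For a coalition C ⊆ S disjoint from Aux, let GameBw(C) be the backward safety game with Safe-controlled states C ∪ Aux and the engraved transition relation →_C. Then the backward cooperative game is monotone: for all coalitions C_1 ⊆ C_2 ⊆ S disjoint from Aux, if player Safe has a winning strategy in GameBw(C_1), then player Safe has a winning strategy in GameBw(C_2). -/
import Mathlib


/-- Player Safe has a winning strategy in the safety game on state set `S`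
with Safe-controlled states `P`, transition relation `R`, initial state
`sinit` and bad states `Bad`. -/
def SafeWins {S : Type*} (P : Set S) (R : S → S → Prop)
    (sinit : S) (Bad : Set S) : Prop :=
  ∃ σ : S → S, (∀ s ∈ P, R s (σ s)) ∧
    ∀ ρ : ℕ → S, ρ 0 = sinit →
      (∀ i, (ρ i ∈ P → ρ (i + 1) = σ (ρ i)) ∧ (ρ i ∉ P → R (ρ i) (ρ (i + 1)))) →
      ∀ i, ρ i ∉ Bad

/-- The engraved transition relation of the backward game for a counterexample
`τ = τ_0 … τ_k` and a set `P` (= coalition ∪ auxiliary states):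
for each `i < k` with `τ_i ∉ P`, the only transition from `τ_i` is
`τ_i → τ_{i+1}`; every other state keeps its transitions from `step`. -/
def engraved {S : Type*} (step : S → S → Prop) (τ : ℕ → S) (k : ℕ)
    (P : Set S) : S → S → Prop :=
  fun s t =>
    ((∃ i, i < k ∧ τ i = s) ∧ s ∉ P ∧ ∃ i, i < k ∧ τ i = s ∧ τ (i + 1) = t) ∨
    ((¬ (∃ i, i < k ∧ τ i = s) ∨ s ∈ P) ∧ step s t)

/-- **Monotonicity of the backward cooperative game.** Let `(S, →, s_init, Bad)`
be a transition system with `→` serial and all bad states absorbing, let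
`τ = τ_0 … τ_k` be a loop-free counterexample and `Aux ⊆ S`. For coalitions
`C₁ ⊆ C₂` disjoint from `Aux`: if Safe wins the backward game `GameBw(C₁)`,
then Safe wins the backward game `GameBw(C₂)`. -/
theorem backward_game_monotone {S : Type*}
    (step : S → S → Prop) (hser : ∀ s, ∃ t, step s t)
    (sinit : S) (Bad : Set S)
    (habs : ∀ s ∈ Bad, ∀ t, step s t ↔ t = s)
    (τ : ℕ → S) (k : ℕ)
    (hτ0 : τ 0 = sinit)
    (hτpath : ∀ i, i < k → step (τ i) (τ (i + 1)))
    (hτbad : τ k ∈ Bad)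
    (hτnodup : ∀ i j, i ≤ k → j ≤ k → τ i = τ j → i = j)
    (Aux C₁ C₂ : Set S)
    (hd₁ : C₁ ∩ Aux = ∅) (hd₂ : C₂ ∩ Aux = ∅) (hC : C₁ ⊆ C₂)
    (h : SafeWins (C₁ ∪ Aux) (engraved step τ k (C₁ ∪ Aux)) sinit Bad) :
    SafeWins (C₂ ∪ Aux) (engraved step τ k (C₂ ∪ Aux)) sinit Bad := by
  classical
  obtain ⟨σ, hσ, hwin⟩ := h
  have hPsub : C₁ ∪ Aux ⊆ C₂ ∪ Aux := Set.union_subset_union_left Aux hC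
  refine ⟨fun s => if s ∈ C₁ ∪ Aux then σ s else
      if hp : ∃ i, i < k ∧ τ i = s then τ (hp.choose + 1) else (hser s).choose,
    ?_, ?_⟩
  · intro s hs
    by_cases h1 : s ∈ C₁ ∪ Aux
    · have hstep : step s (σ s) := by
        rcases hσ s h1 with ⟨_, hnp, _⟩ | ⟨_, hstep⟩
        · exact absurd h1 hnp
        · exact hstep
      simp only [if_pos h1]
      exact Or.inr ⟨Or.inr hs, hstep⟩
    · simp only [if_neg h1]
      by_cases hp : ∃ i, i < k ∧ τ i = s
      · simp only [dif_pos hp]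
        obtain ⟨hik, hτi⟩ := hp.choose_spec
        have hst := hτpath hp.choose hik
        rw [hτi] at hst
        exact Or.inr ⟨Or.inr hs, hst⟩
      · simp only [dif_neg hp]
        exact Or.inr ⟨Or.inr hs, (hser s).choose_spec⟩
  · intro ρ hρ0 hcons
    refine hwin ρ hρ0 (fun i => ?_)
    constructor
    · intro h1
      have := (hcons i).1 (hPsub h1)
      simp only [this, if_pos h1]
    · intro h1
      by_cases h2 : ρ i ∈ C₂ ∪ Aux
      · have heq := (hcons i).1 h2
        simp only [if_neg h1] at heq
        by_cases hp : ∃ j, j < k ∧ τ j = ρ i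
        · simp only [dif_pos hp] at heq
          obtain ⟨hjk, hτj⟩ := hp.choose_spec
          exact Or.inl ⟨hp, h1, hp.choose, hjk, hτj, heq.symm⟩
        · simp only [dif_neg hp] at heq
          exact Or.inr ⟨Or.inl hp, heq ▸ (hser (ρ i)).choose_spec⟩
      · rcases (hcons i).2 h2 with ⟨hon, _, hnext⟩ | ⟨hcase, hstep⟩
        · exact Or.inl ⟨hon, h1, hnext⟩
        · rcases hcase with hnon | hmem
          · exact Or.inr ⟨Or.inl hnon, hstep⟩
          · exact absurd hmem h2
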